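/- Let n be a positive integer and suppose p, q ∈ Mat_n(ℂ) commute (pq = qp) and satisfy −p² + 2pq + p = 0 and −q² + 2pq + q = 0. Then there exists an invertible matrix S ∈ Mat_n(ℂ) such that P = S p S⁻¹ and Q = S q S⁻¹ are both diagonal and, for every index i, the pair of diagonal entries (P_{ii}, Q_{ii}) belongs to the four-element set {(−1,−1), (1,0), (0,1), (0,0)}. -/

import Mathlib

theorem aux_pair_mem_residue (k : Fin 4) :
    ((if k = 0 then (-1:ℂ) else if k = 1 then 1 else 0),
     (if k = 0 then (-1:ℂ) else if k = 2 then 1 else 0)) ∈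
    ({(-1, -1), (1, 0), (0, 1), (0, 0)} : Set (ℂ × ℂ)) := by
  fin_cases k <;> norm_num [Fin.ext_iff]

/-- Commuting solutions of the residue equations can be simultaneously
diagonalized so that every pair of diagonal entries lies in
`{(−1,−1), (1,0), (0,1), (0,0)}`. -/
theorem residue_commuting_normal_form (n : ℕ) (hn : 0 < n)
    (p q : Matrix (Fin n) (Fin n) ℂ) (hcomm : p * q = q * p)
    (hp : -p ^ 2 + 2 * (p * q) + p = 0)
    (hq : -q ^ 2 + 2 * (p * q) + q = 0) :
    ∃ S : Matrix (Fin n) (Fin n) ℂ, IsUnit S.det ∧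
      (S * p * S⁻¹).IsDiag ∧ (S * q * S⁻¹).IsDiag ∧
      ∀ i : Fin n, ((S * p * S⁻¹) i i, (S * q * S⁻¹) i i) ∈
        ({(-1, -1), (1, 0), (0, 1), (0, 0)} : Set (ℂ × ℂ)) := by
  classical
  -- ## Part 1: algebraic identities
  have hpp : p * p = 2 * (p * q) + p := by
    have h : p * p - (2 * (p * q) + p) = -(-p ^ 2 + 2 * (p * q) + p) := by noncomm_ring
    rw [hp, neg_zero, sub_eq_zero] at h; exact h
  have hqq : q * q = 2 * (p * q) + q := by
    have h : q * q - (2 * (p * q) + q) = -(-q ^ 2 + 2 * (p * q) + q) := by noncomm_ring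
    rw [hq, neg_zero, sub_eq_zero] at h; exact h
  have step2 : (p * q) * q = 2 * (p * (p * q)) + p * q := by
    calc (p*q)*q = p*(q*q) := by noncomm_ring
    _ = p*(2*(p*q)+q) := by rw [hqq]
    _ = 2*(p*(p*q)) + p*q := by noncomm_ring
  have hc : p * (p * q) = 2 * (2*(p*(p*q)) + p*q) + p * q := by
    rw [← step2]
    calc p*(p*q) = (p*p)*q := by noncomm_ring
    _ = (2*(p*q)+p)*q := by rw [hpp]
    _ = 2*((p*q)*q) + p*q := by noncomm_ring
  have h3 : (3:ℂ) • (p * (p * q) + p * q) = 0 := by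
    have h' : 3*(p*(p*q)) + 3*(p*q) = -(p*(p*q) - (2 * (2*(p*(p*q)) + p*q) + p * q)) := by
      noncomm_ring
    rw [← hc, sub_self, neg_zero] at h'
    rw [Algebra.smul_def, map_ofNat]
    calc (3 : Matrix (Fin n) (Fin n) ℂ) * (p * (p * q) + p * q)
        = 3*(p*(p*q)) + 3*(p*q) := by noncomm_ring
    _ = 0 := h'
  have hsum : p * (p * q) + p * q = 0 := (smul_eq_zero.mp h3).resolve_left (by norm_num)
  have hpr : p * (p * q) = -(p * q) := eq_neg_of_add_eq_zero_left hsum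
  have hrq : (p * q) * q = -(p * q) := by rw [step2, hpr]; noncomm_ring
  have hqr : q * (p * q) = -(p * q) := by
    calc q*(p*q) = (q*p)*q := by noncomm_ring
    _ = (p*q)*q := by rw [← hcomm]
    _ = -(p*q) := hrq
  -- powers of a := p + 2q
  set a := p + 2 * q with ha
  have ha2 : a * a = p + 4 * q + 14 * (p * q) := by
    have h : a*a = p*p + 2*(p*q) + 2*(q*p) + 4*(q*q) := by rw [ha]; noncomm_ring
    rw [← hcomm, hpp, hqq] at h
    rw [h]; noncomm_ring
  have ha3 : a * (a * a) = p + 8 * q - 18 * (p * q) := by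
    rw [ha2]
    have h : a * (p + 4 * q + 14 * (p * q))
        = p*p + 4*(p*q) + 14*(p*(p*q)) + 2*(q*p) + 8*(q*q) + 28*(q*(p*q)) := by
      rw [ha]; noncomm_ring
    rw [← hcomm, hpp, hqq, hpr, hqr] at h
    rw [h]; noncomm_ring
  have hP : 30 * p = -7 * (a*(a*a)) - 9 * (a*a) + 46 * a := by
    rw [ha3, ha2, ha]; noncomm_ring
  have hQ : 60 * q = 7 * (a*(a*a)) + 9 * (a*a) - 16 * a := by
    rw [ha3, ha2, ha]; noncomm_ring
  have hP' : (30:ℂ) • p = (-7:ℂ) • (a*(a*a)) + (-9:ℂ) • (a*a) + (46:ℂ) • a := by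
    rw [show (30:ℂ) • p = 30 * p by rw [Algebra.smul_def, map_ofNat],
      show (-7:ℂ) • (a*(a*a)) = -7 * (a*(a*a)) by
        rw [Algebra.smul_def, map_neg, map_ofNat, neg_mul],
      show (-9:ℂ) • (a*a) = -9 * (a*a) by rw [Algebra.smul_def, map_neg, map_ofNat, neg_mul],
      show (46:ℂ) • a = 46 * a by rw [Algebra.smul_def, map_ofNat], hP]
    noncomm_ring
  have hQ' : (60:ℂ) • q = (7:ℂ) • (a*(a*a)) + (9:ℂ) • (a*a) + (-16:ℂ) • a := by
    rw [show (60:ℂ) • q = 60 * q by rw [Algebra.smul_def, map_ofNat],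
      show (7:ℂ) • (a*(a*a)) = 7 * (a*(a*a)) by rw [Algebra.smul_def, map_ofNat],
      show (9:ℂ) • (a*a) = 9 * (a*a) by rw [Algebra.smul_def, map_ofNat],
      show (-16:ℂ) • a = -16 * a by rw [Algebra.smul_def, map_neg, map_ofNat, neg_mul], hQ]
    noncomm_ring
  -- action of a on the four projections
  have hae1 : a * (p*q) = -(3*(p*q)) := by
    have h : a * (p*q) = p*(p*q) + 2*(q*(p*q)) := by rw [ha]; noncomm_ring
    rw [hpr, hqr] at h; rw [h]; noncomm_ring
  have hae2 : a * (p + p*q) = p + p*q := by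
    have h : a * (p + p*q) = p*p + p*(p*q) + 2*(q*p) + 2*(q*(p*q)) := by rw [ha]; noncomm_ring
    rw [← hcomm, hpp, hpr, hqr] at h; rw [h]; noncomm_ring
  have hae3 : a * (q + p*q) = 2 * (q + p*q) := by
    have h : a * (q + p*q) = p*q + p*(p*q) + 2*(q*q) + 2*(q*(p*q)) := by rw [ha]; noncomm_ring
    rw [hqq, hpr, hqr] at h; rw [h]; noncomm_ring
  have hae4 : a * (1 - p - q - 3*(p*q)) = 0 := by
    have h : a * (1 - p - q - 3*(p*q))
        = a - (p*p + 2*(q*p)) - (p*q + 2*(q*q)) - 3*(p*(p*q) + 2*(q*(p*q))) := by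
      rw [ha]; noncomm_ring
    rw [← hcomm, hpp, hqq, hpr, hqr] at h; rw [h, ha]; noncomm_ring
  -- ## Part 2: eigenvector scalar action of p and q
  have main : ∀ (lamv pc qc : ℂ), 30*pc = -7*(lamv*(lamv*lamv)) - 9*(lamv*lamv) + 46*lamv →
      60*qc = 7*(lamv*(lamv*lamv)) + 9*(lamv*lamv) - 16*lamv →
      ∀ v : Fin n → ℂ, a.mulVec v = lamv • v →
      p.mulVec v = pc • v ∧ q.mulVec v = qc • v := by
    intro lamv pc qc hpc hqc v hv
    have h2 : (a*a).mulVec v = (lamv*lamv) • v := by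
      rw [← Matrix.mulVec_mulVec, hv, Matrix.mulVec_smul, hv, smul_smul]
    have h3' : (a*(a*a)).mulVec v = (lamv*(lamv*lamv)) • v := by
      rw [← Matrix.mulVec_mulVec, h2, Matrix.mulVec_smul, hv, smul_smul]
      congr 1; ring
    constructor
    · have hcomb : (30:ℂ) • p.mulVec v
          = ((-7)*(lamv*(lamv*lamv)) + (-9)*(lamv*lamv) + 46*lamv) • v := by
        calc (30:ℂ) • p.mulVec v = ((30:ℂ) • p).mulVec v :=
              (Matrix.smul_mulVec _ _ _).symm
        _ = ((-7:ℂ) • (a*(a*a)) + (-9:ℂ) • (a*a) + (46:ℂ) • a).mulVec v := by rw [hP']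
        _ = (-7:ℂ) • (a*(a*a)).mulVec v + (-9:ℂ) • (a*a).mulVec v
              + (46:ℂ) • a.mulVec v := by
            rw [Matrix.add_mulVec, Matrix.add_mulVec, Matrix.smul_mulVec,
              Matrix.smul_mulVec, Matrix.smul_mulVec]
        _ = ((-7)*(lamv*(lamv*lamv))) • v + ((-9)*(lamv*lamv)) • v + (46*lamv) • v := by
            rw [h3', h2, hv, smul_smul, smul_smul, smul_smul]
        _ = _ := by rw [← add_smul, ← add_smul]
      have hrhs : (30:ℂ) • (pc • v)
          = ((-7)*(lamv*(lamv*lamv)) + (-9)*(lamv*lamv) + 46*lamv) • v := by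
        rw [smul_smul]
        congr 1
        rw [hpc]; ring
      exact smul_right_injective (Fin n → ℂ) (by norm_num : (30:ℂ) ≠ 0)
        (hcomb.trans hrhs.symm)
    · have hcomb : (60:ℂ) • q.mulVec v
          = (7*(lamv*(lamv*lamv)) + 9*(lamv*lamv) + (-16)*lamv) • v := by
        calc (60:ℂ) • q.mulVec v = ((60:ℂ) • q).mulVec v :=
              (Matrix.smul_mulVec _ _ _).symm
        _ = ((7:ℂ) • (a*(a*a)) + (9:ℂ) • (a*a) + (-16:ℂ) • a).mulVec v := by rw [hQ']
        _ = (7:ℂ) • (a*(a*a)).mulVec v + (9:ℂ) • (a*a).mulVec v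
              + (-16:ℂ) • a.mulVec v := by
            rw [Matrix.add_mulVec, Matrix.add_mulVec, Matrix.smul_mulVec,
              Matrix.smul_mulVec, Matrix.smul_mulVec]
        _ = (7*(lamv*(lamv*lamv))) • v + (9*(lamv*lamv)) • v + ((-16)*lamv) • v := by
            rw [h3', h2, hv, smul_smul, smul_smul, smul_smul]
        _ = _ := by rw [← add_smul, ← add_smul]
      have hrhs : (60:ℂ) • (qc • v)
          = (7*(lamv*(lamv*lamv)) + 9*(lamv*lamv) + (-16)*lamv) • v := by
        rw [smul_smul]
        congr 1
        rw [hqc]; ring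
      exact smul_right_injective (Fin n → ℂ) (by norm_num : (60:ℂ) ≠ 0)
        (hcomb.trans hrhs.symm)
  -- ## Part 3: eigenspace decomposition
  set lam : Fin 4 → ℂ := fun i => if i = 0 then -3 else if i = 1 then 1 else if i = 2 then 2 else 0
    with hlam
  set pv : Fin 4 → ℂ := fun i => if i = 0 then -1 else if i = 1 then 1 else 0 with hpv
  set qv : Fin 4 → ℂ := fun i => if i = 0 then -1 else if i = 2 then 1 else 0 with hqv
  have hval : ∀ k : Fin 4, 30*(pv k) = -7*((lam k)*((lam k)*(lam k))) - 9*((lam k)*(lam k))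
      + 46*(lam k) ∧ 60*(qv k) = 7*((lam k)*((lam k)*(lam k))) + 9*((lam k)*(lam k))
      - 16*(lam k) := by
    intro k
    rw [hlam, hpv, hqv]
    fin_cases k <;> norm_num [Fin.ext_iff]
  set W : Fin 4 → Submodule ℂ (Fin n → ℂ) :=
    fun i => Module.End.eigenspace (Matrix.toLin' a) (lam i) with hW
  have hinj : Function.Injective lam := by
    intro i j h
    rw [hlam] at h
    fin_cases i <;> fin_cases j <;> first
      | rfl
      | (exfalso; norm_num [Fin.ext_iff] at h)
  have hind : iSupIndep W := (Module.End.eigenspaces_iSupIndep (Matrix.toLin' a)).comp hinj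
  have hmem : ∀ (i : Fin 4) (v : Fin n → ℂ), v ∈ W i ↔ a.mulVec v = lam i • v := by
    intro i v
    rw [hW]
    rw [Module.End.mem_eigenspace_iff, Matrix.toLin'_apply]
  have hsup : (⨆ i, W i) = ⊤ := by
    rw [eq_top_iff]
    intro v _
    have hv : v = (p*q).mulVec v + (p + p*q).mulVec v + (q + p*q).mulVec v
        + (1 - p - q - 3*(p*q)).mulVec v := by
      have h1 : (p*q) + (p + p*q) + (q + p*q) + (1 - p - q - 3*(p*q)) = 1 := by noncomm_ring
      rw [← Matrix.add_mulVec, ← Matrix.add_mulVec, ← Matrix.add_mulVec, h1, Matrix.one_mulVec]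
    rw [hv]
    have m1 : (p*q).mulVec v ∈ W 0 := by
      rw [hmem, Matrix.mulVec_mulVec, hae1,
        show -(3*(p*q)) = (-3:ℂ) • (p*q) by rw [Algebra.smul_def, map_neg, map_ofNat, neg_mul],
        Matrix.smul_mulVec, hlam]
      norm_num
    have m2 : (p + p*q).mulVec v ∈ W 1 := by
      rw [hmem, Matrix.mulVec_mulVec, hae2, hlam]
      norm_num
    have m3 : (q + p*q).mulVec v ∈ W 2 := by
      rw [hmem, Matrix.mulVec_mulVec, hae3,
        show (2:Matrix (Fin n) (Fin n) ℂ)*(q + p*q) = (2:ℂ) • (q + p*q) by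
          rw [Algebra.smul_def, map_ofNat],
        Matrix.smul_mulVec, hlam]
      norm_num [Fin.ext_iff]
    have m4 : (1 - p - q - 3*(p*q)).mulVec v ∈ W 3 := by
      rw [hmem, Matrix.mulVec_mulVec, hae4, Matrix.zero_mulVec, hlam]
      symm
      norm_num
      rw [if_neg (by decide), if_neg (by decide), if_neg (by decide)]
    exact add_mem (add_mem (add_mem
      (Submodule.mem_iSup_of_mem 0 m1) (Submodule.mem_iSup_of_mem 1 m2))
      (Submodule.mem_iSup_of_mem 2 m3)) (Submodule.mem_iSup_of_mem 3 m4)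
  have hInt : DirectSum.IsInternal W :=
    DirectSum.isInternal_submodule_of_iSupIndep_of_iSup_eq_top hind hsup
  -- ## Part 4: collected basis and change of basis
  set bW : ∀ i : Fin 4, Module.Basis (Fin (Module.finrank ℂ (W i))) ℂ (W i) :=
    fun i => Module.finBasis ℂ (W i) with hbW
  set b : Module.Basis (Σ i : Fin 4, Fin (Module.finrank ℂ (W i))) ℂ (Fin n → ℂ) :=
    hInt.collectedBasis bW with hb
  have hcard : Fintype.card (Σ i : Fin 4, Fin (Module.finrank ℂ (W i))) = n := by
    have h1 := Module.finrank_eq_card_basis b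
    rw [Module.finrank_pi, Fintype.card_fin] at h1
    exact h1.symm
  set σ := Fintype.equivFinOfCardEq hcard with hσ
  set b' : Module.Basis (Fin n) ℂ (Fin n → ℂ) := b.reindex σ with hb'
  have hb'mem : ∀ j : Fin n, (b' j : Fin n → ℂ) ∈ W ((σ.symm j).1) := by
    intro j
    rw [hb', Module.Basis.reindex_apply]
    exact hInt.collectedBasis_mem bW (σ.symm j)
  have hbp : ∀ j : Fin n, p.mulVec (b' j) = pv ((σ.symm j).1) • (b' j) := by
    intro j
    have := (hmem _ _).mp (hb'mem j)
    exact (main _ _ _ (hval ((σ.symm j).1)).1 (hval ((σ.symm j).1)).2 _ this).1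
  have hbq : ∀ j : Fin n, q.mulVec (b' j) = qv ((σ.symm j).1) • (b' j) := by
    intro j
    have := (hmem _ _).mp (hb'mem j)
    exact (main _ _ _ (hval ((σ.symm j).1)).1 (hval ((σ.symm j).1)).2 _ this).2
  -- change of basis matrices
  set S := b'.toMatrix ⇑(Pi.basisFun ℂ (Fin n)) with hS
  set M := (Pi.basisFun ℂ (Fin n)).toMatrix ⇑b' with hM
  have hSM : S * M = 1 := Module.Basis.toMatrix_mul_toMatrix_flip b' (Pi.basisFun ℂ (Fin n))
  have hMS : M * S = 1 := Module.Basis.toMatrix_mul_toMatrix_flip (Pi.basisFun ℂ (Fin n)) b'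
  have hunit : IsUnit S.det := Matrix.isUnit_det_of_right_inverse hSM
  have hSinv : S⁻¹ = M := Matrix.inv_eq_right_inv hSM
  have hfact : ∀ m : Matrix (Fin n) (Fin n) ℂ,
      S * m * S⁻¹ = LinearMap.toMatrix b' b' (Matrix.toLin' m) := by
    intro m
    have h1 : M * LinearMap.toMatrix b' b' (Matrix.toLin' m) * S = m := by
      rw [hS, hM, basis_toMatrix_mul_linearMap_toMatrix_mul_basis_toMatrix,
        LinearMap.toMatrix_eq_toMatrix', LinearMap.toMatrix'_toLin']
    rw [hSinv]
    conv_lhs => rw [← h1]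
    calc S * (M * LinearMap.toMatrix b' b' (Matrix.toLin' m) * S) * M
        = (S*M) * LinearMap.toMatrix b' b' (Matrix.toLin' m) * (S*M) := by noncomm_ring
    _ = _ := by rw [hSM, one_mul, mul_one]
  have hentry : ∀ (m : Matrix (Fin n) (Fin n) ℂ) (c : Fin n → ℂ),
      (∀ j, m.mulVec (b' j) = c j • (b' j)) →
      ∀ i j, (S * m * S⁻¹) i j = if j = i then c j else 0 := by
    intro m c hmc i j
    rw [hfact, LinearMap.toMatrix_apply, Matrix.toLin'_apply, hmc j, map_smul,
      Module.Basis.repr_self]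
    by_cases hij : j = i
    · rw [if_pos hij, hij, Finsupp.smul_apply, Finsupp.single_eq_same, smul_eq_mul, mul_one]
    · rw [if_neg hij, Finsupp.smul_apply, Finsupp.single_eq_of_ne (Ne.symm hij), smul_eq_mul, mul_zero]
  refine ⟨S, hunit, ?_, ?_, ?_⟩
  · intro i j hij
    rw [hentry p _ hbp i j, if_neg (fun h => hij h.symm)]
  · intro i j hij
    rw [hentry q _ hbq i j, if_neg (fun h => hij h.symm)]
  · intro i
    rw [hentry p _ hbp i i, if_pos rfl, hentry q _ hbq i i, if_pos rfl]
    simp only [hpv, hqv]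
    exact aux_pair_mem_residue _
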